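/- arXiv:1404.5586 — 2 statements merged into one kernel-verified Lean document; each statement's English description precedes it below -/
import Mathlib

section
/- Let c ∈ ℂ with Re(c) > 0 and let y : ℝ → ℂ be a bounded continuous twice-differentiable function satisfying y''(t) - c² y(t) = g(t) for all t ∈ ℝ, where g : ℝ → ℂ is bounded and measurable. Then for every t ∈ ℝ, y(t) = (e^{ct}/(2c)) ∫_t^∞ e^{-cs} (-g(s)) ds + (e^{-ct}/(2c)) ∫_{-∞}^t e^{cs} (-g(s)) ds. -/
open Complex MeasureTheory Set Filter Topology

theorem stmt_1 (c : ℂ) (hc : 0 < c.re) (y g : ℝ → ℂ)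
    (hy_cont : Continuous y) (hy_bdd : ∃ M, ∀ t, ‖y t‖ ≤ M)
    (hy_diff : Differentiable ℝ y) (hy_diff2 : Differentiable ℝ (deriv y))
    (hg_meas : Measurable g) (hg_bdd : ∃ M, ∀ t, ‖g t‖ ≤ M)
    (hode : ∀ t : ℝ, deriv (deriv y) t - c ^ 2 * y t = g t) :
    ∀ t : ℝ,
      y t = Complex.exp (c * t) / (2 * c) *
              (∫ s in Set.Ioi t, Complex.exp (-c * s) * (-g s)) +
            Complex.exp (-c * t) / (2 * c) *
              (∫ s in Set.Iio t, Complex.exp (c * s) * (-g s)) := by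
  obtain ⟨M, hM⟩ := hy_bdd
  obtain ⟨K, hK⟩ := hg_bdd
  have hM0 : 0 ≤ M := le_trans (norm_nonneg _) (hM 0)
  have hK0 : 0 ≤ K := le_trans (norm_nonneg _) (hK 0)
  have hcne : c ≠ 0 := fun h => by simp [h] at hc
  set B : ℝ := ‖c‖ ^ 2 * M + K with hB
  have hB0 : 0 ≤ B := by positivity
  -- bound the second derivative
  have hy2 : ∀ t, ‖deriv (deriv y) t‖ ≤ B := by
    intro t
    have h : deriv (deriv y) t = c ^ 2 * y t + g t := by
      have h' := hode t; linear_combination h'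
    rw [h]
    calc ‖c ^ 2 * y t + g t‖ ≤ ‖c ^ 2 * y t‖ + ‖g t‖ := norm_add_le _ _
      _ ≤ ‖c‖ ^ 2 * M + K := by
          rw [norm_mul, norm_pow]; gcongr; exacts [hM t, hK t]
  -- y' is B-Lipschitz
  have hy'lip : ∀ s t : ℝ, ‖deriv y s - deriv y t‖ ≤ B * ‖s - t‖ := by
    intro s t
    have := convex_univ.norm_image_sub_le_of_norm_deriv_le (f := deriv y)
      (fun x _ => hy_diff2 x) (fun x _ => hy2 x) (mem_univ t) (mem_univ s)
    simpa using this
  have hy'cont : Continuous (deriv y) := hy_diff2.continuous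
  -- bound y'
  have hy1 : ∀ t, ‖deriv y t‖ ≤ 2 * M + B := by
    intro t
    have hFTC : ∫ s in t..(t + 1), deriv y s = y (t + 1) - y t :=
      intervalIntegral.integral_deriv_eq_sub (fun x _ => hy_diff x)
        (hy'cont.intervalIntegrable _ _)
    have h3 : ∫ s in t..(t + 1), (deriv y s - deriv y t) = (y (t + 1) - y t) - deriv y t := by
      rw [intervalIntegral.integral_sub (hy'cont.intervalIntegrable _ _)
        intervalIntegrable_const, hFTC]
      simp
    have h2 : ‖(y (t + 1) - y t) - deriv y t‖ ≤ B := by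
      rw [← h3]
      have := intervalIntegral.norm_integral_le_of_norm_le_const (C := B)
        (f := fun s => deriv y s - deriv y t) (a := t) (b := t + 1) ?_
      · simpa using this
      · intro x hx
        rw [Set.uIoc_of_le (by linarith)] at hx
        calc ‖deriv y x - deriv y t‖ ≤ B * ‖x - t‖ := hy'lip x t
          _ ≤ B * 1 := by
              gcongr
              rw [Real.norm_eq_abs, abs_le]
              constructor
              · linarith [hx.1]
              · linarith [hx.2]
          _ = B := mul_one B
    calc ‖deriv y t‖ = ‖(y (t + 1) - y t) - ((y (t + 1) - y t) - deriv y t)‖ := by ring_nf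
      _ ≤ ‖y (t + 1) - y t‖ + ‖(y (t + 1) - y t) - deriv y t‖ := norm_sub_le _ _
      _ ≤ (M + M) + B := by
          gcongr
          exact le_trans (norm_sub_le _ _) (add_le_add (hM _) (hM _))
      _ = 2 * M + B := by ring
  set M' : ℝ := (2 * M + B) + ‖c‖ * M with hM'
  have hcy : ∀ t, ‖c * y t‖ ≤ ‖c‖ * M := fun t => by
    rw [norm_mul]; exact mul_le_mul_of_nonneg_left (hM t) (norm_nonneg c)
  have hu_bdd : ∀ t, ‖deriv y t + c * y t‖ ≤ M' := fun t =>
    le_trans (norm_add_le _ _) (add_le_add (hy1 t) (hcy t))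
  have hv_bdd : ∀ t, ‖deriv y t - c * y t‖ ≤ M' := fun t =>
    le_trans (norm_sub_le _ _) (add_le_add (hy1 t) (hcy t))
  have hM'0 : 0 ≤ M' := le_trans (norm_nonneg _) (hu_bdd 0)
  -- derivative computations
  have hexp : ∀ (a : ℂ) (x : ℝ), HasDerivAt (fun s : ℝ => Complex.exp (a * s))
      (a * Complex.exp (a * x)) x := by
    intro a x
    have h1 : HasDerivAt (fun z : ℂ => Complex.exp (a * z)) (Complex.exp (a * x) * (a * 1)) x :=
      ((hasDerivAt_id (x : ℂ)).const_mul a).cexp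
    have := h1.comp_ofReal
    simpa [mul_comm] using this
  have hF : ∀ x : ℝ, HasDerivAt (fun s : ℝ => Complex.exp (-c * s) * (deriv y s + c * y s))
      (Complex.exp (-c * x) * g x) x := by
    intro x
    have h1 := (hexp (-c) x).mul
      (((hy_diff2 x).hasDerivAt).add (((hy_diff x).hasDerivAt).const_mul c))
    refine h1.congr_deriv ?_
    rw [← hode x]
    simp only [Pi.add_apply]
    ring
  have hG : ∀ x : ℝ, HasDerivAt (fun s : ℝ => Complex.exp (c * s) * (deriv y s - c * y s))
      (Complex.exp (c * x) * g x) x := by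
    intro x
    have h1 := (hexp c x).mul
      (((hy_diff2 x).hasDerivAt).sub (((hy_diff x).hasDerivAt).const_mul c))
    refine h1.congr_deriv ?_
    rw [← hode x]
    simp only [Pi.sub_apply]
    ring
  -- norm of the integrand
  have hnorm : ∀ (a : ℂ) (x : ℝ), ‖Complex.exp (a * x) * g x‖ ≤ K * Real.exp (a.re * x) := by
    intro a x
    rw [norm_mul, Complex.norm_exp]
    have : (a * (x : ℂ)).re = a.re * x := by simp
    rw [this, mul_comm]
    gcongr
    exact hK x
  have hmeas : ∀ a : ℂ, AEStronglyMeasurable (fun x : ℝ => Complex.exp (a * x) * g x)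
      (volume : Measure ℝ) :=
    fun a => ((Complex.continuous_exp.comp
      (continuous_const.mul Complex.continuous_ofReal)).aestronglyMeasurable).mul
      hg_meas.aestronglyMeasurable
  intro t
  -- integrability on Ioi t
  have hint1 : IntegrableOn (fun x : ℝ => Complex.exp (-c * x) * g x) (Ioi t) := by
    refine Integrable.mono' ((exp_neg_integrableOn_Ioi t hc).const_mul K)
      ((hmeas (-c)).restrict) ?_
    filter_upwards with x
    simpa using hnorm (-c) x
  -- integrability on Iic t
  have hexp_int : IntegrableOn (fun x : ℝ => Real.exp (c.re * x)) (Iic t) := by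
    have h0 : IntegrableOn (fun x : ℝ => Real.exp (-c.re * x)) (Ioi (-t)) :=
      exp_neg_integrableOn_Ioi _ hc
    have h2 := (MeasurePreserving.integrableOn_comp_preimage
      (Measure.measurePreserving_neg (volume : Measure ℝ))
      (Homeomorph.neg ℝ).measurableEmbedding).2 h0
    rw [integrableOn_Iic_iff_integrableOn_Iio]
    have hpre : (Neg.neg : ℝ → ℝ) ⁻¹' (Ioi (-t)) = Iio t := by
      ext x; simp [neg_lt]
    rw [hpre] at h2
    refine h2.congr_fun (fun x _ => ?_) measurableSet_Iio
    simp [Function.comp]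
  have hint2 : IntegrableOn (fun x : ℝ => Complex.exp (c * x) * g x) (Iic t) := by
    refine Integrable.mono' (hexp_int.const_mul K) ((hmeas c).restrict) ?_
    filter_upwards with x
    simpa using hnorm c x
  -- limits at infinity
  have htend1 : Tendsto (fun x : ℝ => Complex.exp (-c * x) * (deriv y x + c * y x))
      atTop (𝓝 0) := by
    have hlim : Tendsto (fun x : ℝ => M' * Real.exp (-(c.re * x))) atTop (𝓝 0) := by
      have h1 : Tendsto (fun x : ℝ => c.re * x) atTop atTop :=
        tendsto_id.const_mul_atTop hc
      have := Real.tendsto_exp_neg_atTop_nhds_zero.comp h1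
      simpa using this.const_mul M'
    have hb : ∀ x : ℝ, ‖Complex.exp (-c * x) * (deriv y x + c * y x)‖
        ≤ M' * Real.exp (-(c.re * x)) := by
      intro x
      rw [norm_mul, Complex.norm_exp]
      have h' : (-c * (x : ℂ)).re = -(c.re * x) := by simp
      rw [h', mul_comm]
      gcongr
      exact hu_bdd x
    exact squeeze_zero_norm hb hlim
  have htend2 : Tendsto (fun x : ℝ => Complex.exp (c * x) * (deriv y x - c * y x))
      atBot (𝓝 0) := by
    have hlim : Tendsto (fun x : ℝ => M' * Real.exp (c.re * x)) atBot (𝓝 0) := by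
      have h1 : Tendsto (fun x : ℝ => c.re * x) atBot atBot :=
        tendsto_id.const_mul_atBot hc
      have := Real.tendsto_exp_atBot.comp h1
      simpa using this.const_mul M'
    have hb : ∀ x : ℝ, ‖Complex.exp (c * x) * (deriv y x - c * y x)‖
        ≤ M' * Real.exp (c.re * x) := by
      intro x
      rw [norm_mul, Complex.norm_exp]
      have h' : (c * (x : ℂ)).re = c.re * x := by simp
      rw [h', mul_comm]
      gcongr
      exact hv_bdd x
    exact squeeze_zero_norm hb hlim
  -- FTC on the half-lines
  have key1 : ∫ x in Ioi t, Complex.exp (-c * x) * g x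
      = 0 - Complex.exp (-c * t) * (deriv y t + c * y t) :=
    integral_Ioi_of_hasDerivAt_of_tendsto' (fun x _ => hF x) hint1 htend1
  have key2 : ∫ x in Iic t, Complex.exp (c * x) * g x
      = Complex.exp (c * t) * (deriv y t - c * y t) - 0 :=
    integral_Iic_of_hasDerivAt_of_tendsto' (fun x _ => hG x) hint2 htend2
  -- rewrite the integrals in the goal
  have e1 : ∫ s in Ioi t, Complex.exp (-c * s) * (-g s)
      = Complex.exp (-c * t) * (deriv y t + c * y t) := by
    have : (fun s : ℝ => Complex.exp (-c * s) * (-g s))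
        = fun s : ℝ => -(Complex.exp (-c * s) * g s) := by
      funext s; ring
    rw [this, integral_neg, key1]
    ring
  have e2 : ∫ s in Iio t, Complex.exp (c * s) * (-g s)
      = -(Complex.exp (c * t) * (deriv y t - c * y t)) := by
    have h' : (fun s : ℝ => Complex.exp (c * s) * (-g s))
        = fun s : ℝ => -(Complex.exp (c * s) * g s) := by
      funext s; ring
    rw [h', integral_neg, ← integral_Iic_eq_integral_Iio, key2]
    ring
  rw [e1, e2]
  have hE : Complex.exp (c * t) * Complex.exp (-(c * t)) = 1 := by
    rw [← Complex.exp_add, add_neg_cancel, Complex.exp_zero]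
  simp only [neg_mul] at hE ⊢
  have h2c : (2 : ℂ) * c ≠ 0 := mul_ne_zero two_ne_zero hcne
  rw [div_mul_eq_mul_div, div_mul_eq_mul_div, ← add_div, eq_div_iff h2c]
  linear_combination (-(2 * c * y t)) * hE
end

section
/- Let c ∈ ℂ with Re(c) > 0, let A, B : ℝ → ℂ be bounded measurable functions with ‖A‖_∞ < |c| Re(c), and let y : ℝ → ℂ be a bounded continuous twice-differentiable weak solution of y''(t) + (A(t) - c²) y(t) = B(t) on ℝ. Then |y(t)| ≤ ‖B‖_∞ / (|c| Re(c) - ‖A‖_∞) for all t ∈ ℝ. -/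
open Complex MeasureTheory intervalIntegral Filter


lemma expo_int (r t T : ℝ) (hr : r ≠ 0) :
    ∫ s in t..T, Real.exp (r * s) = (Real.exp (r*T) - Real.exp (r*t)) / r := by
  have := intervalIntegral.integral_comp_mul_left (a := t) (b := T) (c := r)
      (f := fun x => Real.exp x) hr
  simpa [integral_exp, smul_eq_mul, div_eq_inv_mul] using this

lemma lemA (c : ℂ) (hc : 0 < c.re) (u f : ℝ → ℂ) (K F : ℝ)
    (hu : Differentiable ℝ u) (hK : ∀ t, ‖u t‖ ≤ K)
    (hf : Measurable f) (hF : ∀ t, ‖f t‖ ≤ F)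
    (hode : ∀ t, deriv u t = c * u t + f t) :
    ∀ t, ‖u t‖ ≤ F / c.re := by
  intro t
  have hF0 : 0 ≤ F := le_trans (norm_nonneg _) (hF 0)
  have hg : ∀ s : ℝ, HasDerivAt (fun s : ℝ => Complex.exp (-c * s) * u s)
      (Complex.exp (-c * s) * f s) s := by
    intro s
    have hlin : HasDerivAt (fun s : ℝ => -c * (s : ℂ)) (-c) s := by
      simpa using (Complex.ofRealCLM.hasDerivAt (x := s)).const_mul (-c)
    have hexp := (Complex.hasDerivAt_exp (-c * s)).comp s hlin
    have h2 := hexp.mul ((hu s).hasDerivAt)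
    simp only [Function.comp] at h2
    refine h2.congr_deriv ?_
    rw [hode s]; ring
  have key : ∀ T : ℝ, t ≤ T → ‖u t‖ ≤ K * Real.exp (c.re * (t - T)) + F / c.re := by
    intro T hT
    have hmeas : Measurable (fun s : ℝ => Complex.exp (-c * s) * f s) :=
      (Complex.measurable_exp.comp (measurable_const.mul Complex.measurable_ofReal)).mul hf
    have hbound : ∀ s ∈ Set.uIoc t T, ‖Complex.exp (-c * s) * f s‖ ≤ F * Real.exp (-c.re * s) := by
      intro s _
      rw [norm_mul, Complex.norm_exp]
      have h : ((-c : ℂ) * (s:ℝ)).re = -c.re * s := by simp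
      rw [h, mul_comm]
      exact mul_le_mul_of_nonneg_right (hF s) (Real.exp_nonneg _)
    have hgint : IntervalIntegrable (fun s : ℝ => F * Real.exp (-c.re * s)) volume t T :=
      (Continuous.intervalIntegrable (by continuity) t T)
    have hint : IntervalIntegrable (fun s : ℝ => Complex.exp (-c * s) * f s) volume t T := by
      apply hgint.mono_fun' (hmeas.aestronglyMeasurable)
      filter_upwards [ae_restrict_mem measurableSet_uIoc] with s hs
      exact hbound s hs
    have heq : ∫ s in t..T, Complex.exp (-c * s) * f s
        = Complex.exp (-c * T) * u T - Complex.exp (-c * t) * u t :=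
      intervalIntegral.integral_eq_sub_of_hasDerivAt (fun s _ => hg s) hint
    have hval : ∫ s in t..T, F * Real.exp (-c.re * s)
        = F * ((Real.exp (-c.re*T) - Real.exp (-c.re*t)) / (-c.re)) := by
      rw [intervalIntegral.integral_const_mul, expo_int (-c.re) t T (by linarith)]
    have e1 := Real.exp_pos (-c.re*t)
    have e2 := Real.exp_pos (-c.re*T)
    have hle : Real.exp (-c.re*T) ≤ Real.exp (-c.re*t) := Real.exp_le_exp.2 (by nlinarith)
    have hnorm : ‖∫ s in t..T, Complex.exp (-c * s) * f s‖
        ≤ F / c.re * Real.exp (-c.re * t) := by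
      have h1 : ‖∫ s in t..T, Complex.exp (-c * s) * f s‖
          ≤ |∫ s in t..T, F * Real.exp (-c.re * s)| := by
        apply intervalIntegral.norm_integral_le_abs_of_norm_le _ hgint
        filter_upwards [ae_restrict_mem measurableSet_uIoc] with s hs
        exact hbound s hs
      refine h1.trans ?_
      rw [hval]
      have hrw : F * ((Real.exp (-c.re*T) - Real.exp (-c.re*t)) / (-c.re))
          = F * (Real.exp (-c.re*t) - Real.exp (-c.re*T)) / c.re := by
        rw [div_neg, ← neg_div, neg_sub, ← mul_div_assoc]
      rw [hrw, _root_.abs_of_nonneg (by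
        apply div_nonneg _ hc.le
        exact mul_nonneg hF0 (by linarith))]
      have : F * (Real.exp (-c.re*t) - Real.exp (-c.re*T)) / c.re
          ≤ F * Real.exp (-c.re*t) / c.re := by
        gcongr
        linarith
      have heqq : F * Real.exp (-c.re*t) / c.re = F / c.re * Real.exp (-c.re*t) := by ring
      linarith [this]
    have h2 : Real.exp (-c.re * t) * ‖u t‖ ≤ Real.exp (-c.re * T) * K
        + F / c.re * Real.exp (-c.re * t) := by
      have h4 := norm_sub_norm_le (Complex.exp (-c * t) * u t) (Complex.exp (-c * T) * u T)
      rw [norm_sub_rev, ← heq] at h4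
      have h3 : ‖Complex.exp (-c * T) * u T‖ ≤ Real.exp (-c.re * T) * K := by
        rw [norm_mul, Complex.norm_exp]
        have h : ((-c : ℂ) * (T:ℝ)).re = -c.re * T := by simp
        rw [h]
        exact mul_le_mul_of_nonneg_left (hK T) (Real.exp_nonneg _)
      have h5 : ‖Complex.exp (-c * t) * u t‖ = Real.exp (-c.re * t) * ‖u t‖ := by
        rw [norm_mul, Complex.norm_exp]
        congr 1
        simp
      rw [h5] at h4
      linarith [hnorm, h3, h4]
    have hpos : (0:ℝ) < Real.exp (-c.re * t) := Real.exp_pos _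
    have h6 : ‖u t‖ ≤ (Real.exp (-c.re*T) * K + F/c.re * Real.exp (-c.re*t))
        / Real.exp (-c.re*t) := by
      rw [le_div_iff₀ hpos]
      linarith [h2]
    refine h6.trans_eq ?_
    rw [add_div, mul_div_assoc, mul_div_cancel_right₀ _ hpos.ne']
    congr 1
    calc Real.exp (-c.re*T) * (K / Real.exp (-c.re*t))
        = K * (Real.exp (-c.re*T) / Real.exp (-c.re*t)) := by ring
      _ = K * Real.exp (-c.re*T - (-c.re*t)) := by rw [Real.exp_sub]
      _ = K * Real.exp (c.re*(t-T)) := by ring_nf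
  have harg : Tendsto (fun T : ℝ => c.re * (t - T)) atTop atBot := by
    apply Tendsto.const_mul_atBot hc
    exact tendsto_atBot_add_const_left _ t tendsto_neg_atTop_atBot
  have htend : Tendsto (fun T : ℝ => K * Real.exp (c.re * (t - T)) + F / c.re) atTop
      (nhds (F / c.re)) := by
    have := ((Real.tendsto_exp_atBot.comp harg).const_mul K).add_const (F / c.re)
    simpa using this
  exact ge_of_tendsto htend ((eventually_ge_atTop t).mono fun T hT => key T hT)

lemma lemB (c : ℂ) (hc : 0 < c.re) (u f : ℝ → ℂ) (K F : ℝ)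
    (hu : Differentiable ℝ u) (hK : ∀ t, ‖u t‖ ≤ K)
    (hf : Measurable f) (hF : ∀ t, ‖f t‖ ≤ F)
    (hode : ∀ t, deriv u t = -c * u t + f t) :
    ∀ t, ‖u t‖ ≤ F / c.re := by
  have hd : ∀ s : ℝ, HasDerivAt (fun s : ℝ => u (-s)) (c * u (-s) + -f (-s)) s := by
    intro s
    have h := ((hu (-s)).hasDerivAt).scomp s (hasDerivAt_neg s)
    have heq : ((-1 : ℝ) • deriv u (-s)) = c * u (-s) + -f (-s) := by
      rw [hode (-s)]
      simp
    rwa [heq] at h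
  have := lemA c hc (fun s => u (-s)) (fun s => -f (-s)) K F
    (fun s => (hd s).differentiableAt)
    (fun s => hK (-s))
    ((hf.comp measurable_neg).neg)
    (fun s => by simpa using hF (-s))
    (fun s => by rw [(hd s).deriv])
  intro t
  simpa using this (-t)

lemma lemC (y : ℝ → ℂ) (M M2 : ℝ) (hM2 : 0 ≤ M2)
    (hy_diff : Differentiable ℝ y) (hy_diff2 : Differentiable ℝ (deriv y))
    (hM : ∀ t, ‖y t‖ ≤ M) (h2 : ∀ t, ‖deriv (deriv y) t‖ ≤ M2) :
    ∀ t, ‖deriv y t‖ ≤ 2*M + M2 := by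
  intro t
  have hcont : Continuous (deriv y) := hy_diff2.continuous
  have hint1 : IntervalIntegrable (deriv y) volume t (t+1) := hcont.intervalIntegrable _ _
  have hI : ∫ s in t..t+1, deriv y s = y (t+1) - y t :=
    integral_eq_sub_of_hasDerivAt (fun s _ => (hy_diff s).hasDerivAt) hint1
  have hint2 : ∀ a b : ℝ, IntervalIntegrable (deriv (deriv y)) volume a b := by
    intro a b
    apply (_root_.intervalIntegrable_const (c := M2)).mono_fun' ((measurable_deriv _).aestronglyMeasurable)
    filter_upwards with s using h2 s
  have hstep : ∀ s, ‖deriv y s - deriv y t‖ ≤ M2 * |s - t| := by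
    intro s
    have h := integral_eq_sub_of_hasDerivAt (f := deriv y)
      (fun r _ => (hy_diff2 r).hasDerivAt) (hint2 t s)
    rw [← h]
    have := intervalIntegral.norm_integral_le_of_norm_le_const
      (a := t) (b := s) (C := M2) (f := deriv (deriv y)) (fun r _ => h2 r)
    simpa [abs_sub_comm] using this
  have hsplit : ∫ s in t..t+1, (deriv y s - deriv y t) = (y (t+1) - y t) - deriv y t := by
    rw [intervalIntegral.integral_sub hint1 (_root_.intervalIntegrable_const), hI]
    simp
  have hnorm2 : ‖(y (t+1) - y t) - deriv y t‖ ≤ M2 := by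
    rw [← hsplit]
    have := intervalIntegral.norm_integral_le_of_norm_le_const (a := t) (b := t+1)
      (C := M2) (f := fun s => deriv y s - deriv y t) ?_
    · simpa using this
    · intro s hs
      have hs' : s ∈ Set.Ioc t (t+1) := by rwa [Set.uIoc_of_le (by linarith)] at hs
      refine (hstep s).trans ?_
      have h1 : |s - t| ≤ 1 := by
        rw [_root_.abs_of_nonneg (by linarith [hs'.1])]
        linarith [hs'.2]
      nlinarith
  calc ‖deriv y t‖ = ‖(y (t+1) - y t) - ((y (t+1) - y t) - deriv y t)‖ := by
        congr 1; ring
    _ ≤ ‖y (t+1) - y t‖ + ‖(y (t+1) - y t) - deriv y t‖ := norm_sub_le _ _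
    _ ≤ (‖y (t+1)‖ + ‖y t‖) + M2 := by
        gcongr
        exact norm_sub_le _ _
    _ ≤ 2*M + M2 := by
        have := hM (t+1); have := hM t; linarith


theorem stmt_3 (c : ℂ) (hc : 0 < c.re) (A B y : ℝ → ℂ) (MA MB : ℝ)
    (hA_meas : Measurable A) (hB_meas : Measurable B)
    (hA_bdd : ∀ t, ‖A t‖ ≤ MA) (hB_bdd : ∀ t, ‖B t‖ ≤ MB)
    (hMA : MA < ‖c‖ * c.re)
    (hy_cont : Continuous y) (hy_bdd : ∃ M, ∀ t, ‖y t‖ ≤ M)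
    (hy_diff : Differentiable ℝ y) (hy_diff2 : Differentiable ℝ (deriv y))
    (hode : ∀ t : ℝ, deriv (deriv y) t + (A t - c ^ 2) * y t = B t) :
    ∀ t : ℝ, ‖y t‖ ≤ MB / (‖c‖ * c.re - MA) := by
  obtain ⟨M, hM⟩ := hy_bdd
  have hMA0 : 0 ≤ MA := le_trans (norm_nonneg _) (hA_bdd 0)
  have hMB0 : 0 ≤ MB := le_trans (norm_nonneg _) (hB_bdd 0)
  have habs : 0 < ‖c‖ * c.re := hMA0.trans_lt hMA
  have hcne : c ≠ 0 := fun h => by rw [h] at hc; simp at hc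
  have habs0 : 0 < ‖c‖ := norm_pos_iff.mpr hcne
  have hbdd : BddAbove (Set.range fun t => ‖y t‖) := ⟨M, by rintro x ⟨t, rfl⟩; exact hM t⟩
  set S : ℝ := ⨆ t, ‖y t‖ with hS
  have hSle : ∀ t, ‖y t‖ ≤ S := fun t => le_ciSup hbdd t
  have hS0 : (0:ℝ) ≤ S := le_trans (norm_nonneg _) (hSle 0)
  set f : ℝ → ℂ := fun t => B t - A t * y t with hf
  have hf_meas : Measurable f := hB_meas.sub (hA_meas.mul hy_cont.measurable)
  set F : ℝ := MB + MA * S with hF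
  have hFb : ∀ t, ‖f t‖ ≤ F := by
    intro t
    calc ‖B t - A t * y t‖ ≤ ‖B t‖ + ‖A t * y t‖ := norm_sub_le _ _
      _ ≤ MB + MA * S := by
          rw [norm_mul]
          gcongr
          exacts [hB_bdd t, hA_bdd t, hSle t]
  have hy2 : ∀ t, deriv (deriv y) t = f t + c^2 * y t := by
    intro t
    have h := hode t
    rw [hf]
    ring_nf
    linear_combination h
  set M2 : ℝ := F + ‖(c:ℂ)^2‖ * S with hM2def
  have hM2b : ∀ t, ‖deriv (deriv y) t‖ ≤ M2 := by
    intro t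
    rw [hy2 t]
    calc ‖f t + c^2 * y t‖ ≤ ‖f t‖ + ‖(c:ℂ)^2‖ * ‖y t‖ := by
          refine (norm_add_le _ _).trans ?_
          rw [norm_mul]
      _ ≤ F + ‖(c:ℂ)^2‖ * S := by gcongr; exacts [hFb t, hSle t]
  have hF0 : 0 ≤ F := le_trans (norm_nonneg _) (hFb 0)
  have hM20 : 0 ≤ M2 := le_trans (norm_nonneg _) (hM2b 0)
  have hy'b : ∀ t, ‖deriv y t‖ ≤ 2*S + M2 :=
    lemC y S M2 hM20 hy_diff hy_diff2 hSle hM2b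
  -- w = y' + c y
  have hwb : ∀ t, ‖deriv y t + c * y t‖ ≤ F / c.re := by
    apply lemA c hc _ f ((2*S + M2) + ‖c‖ * S) F
      (hy_diff2.add (hy_diff.const_mul c)) _ hf_meas hFb
    · intro t
      have hd : deriv (fun t => deriv y t + c * y t) t
          = deriv (deriv y) t + c * deriv y t := by
        rw [deriv_fun_add (hy_diff2 t) ((hy_diff t).const_mul c),
          deriv_const_mul c (hy_diff t)]
      show deriv (fun t => deriv y t + c * y t) t = c * (deriv y t + c * y t) + f t
      rw [hd, hy2 t]
      ring
    · intro t
      calc ‖deriv y t + c * y t‖ ≤ ‖deriv y t‖ + ‖c‖ * ‖y t‖ := by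
            refine (norm_add_le _ _).trans ?_
            simp
        _ ≤ (2*S + M2) + ‖c‖ * S := by
            gcongr
            exacts [hy'b t, hSle t]
  have hvb : ∀ t, ‖deriv y t - c * y t‖ ≤ F / c.re := by
    apply lemB c hc _ f ((2*S + M2) + ‖c‖ * S) F
      (hy_diff2.sub (hy_diff.const_mul c)) _ hf_meas hFb
    · intro t
      have hd : deriv (fun t => deriv y t - c * y t) t
          = deriv (deriv y) t - c * deriv y t := by
        rw [deriv_fun_sub (hy_diff2 t) ((hy_diff t).const_mul c),
          deriv_const_mul c (hy_diff t)]
      show deriv (fun t => deriv y t - c * y t) t = -c * (deriv y t - c * y t) + f t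
      rw [hd, hy2 t]
      ring
    · intro t
      calc ‖deriv y t - c * y t‖ ≤ ‖deriv y t‖ + ‖c‖ * ‖y t‖ := by
            refine (norm_sub_le _ _).trans ?_
            simp
        _ ≤ (2*S + M2) + ‖c‖ * S := by
            gcongr
            exacts [hy'b t, hSle t]
  have hyb : ∀ t, ‖y t‖ ≤ F / (‖c‖ * c.re) := by
    intro t
    have hid : (deriv y t + c * y t) - (deriv y t - c * y t) = 2 * c * y t := by ring
    have h1 : ‖(2:ℂ) * c * y t‖ ≤ 2 * (F / c.re) := by
      rw [← hid]
      refine (norm_sub_le _ _).trans ?_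
      have := hwb t; have := hvb t
      linarith
    have h2 : ‖(2:ℂ) * c * y t‖ = 2 * (‖c‖ * ‖y t‖) := by
      rw [norm_mul, norm_mul]
      simp [mul_assoc]
    rw [h2] at h1
    rw [le_div_iff₀ habs]
    have h3 : 2 * (‖c‖ * ‖y t‖) * c.re ≤ 2 * (F / c.re) * c.re :=
      mul_le_mul_of_nonneg_right h1 hc.le
    have h4 : 2 * (F / c.re) * c.re = 2 * F := by field_simp
    nlinarith [h3, h4]
  have hSb : S ≤ F / (‖c‖ * c.re) := ciSup_le hyb
  have hmul : S * (‖c‖ * c.re) ≤ F := (le_div_iff₀ habs).1 hSb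
  intro t
  refine (hSle t).trans ?_
  rw [le_div_iff₀ (by linarith : (0:ℝ) < ‖c‖ * c.re - MA)]
  rw [hF] at hmul
  nlinarith [hmul]
end
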